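/- Fix l ≥ 1 and a strictly decreasing integer tuple n ∈ ℤ^l. The family of determinants f(x,k) = f_{k,n}(x), indexed by strictly decreasing k ∈ ℤ^l, satisfies the differential equation ∂f/∂x (x,k) = ∑_{s=1}^l [f(x, k - e_s) + f(x, k + e_s)]/2, where e_s is the s-th standard basis vector and f(x,·) is extended to all of ℤ^l as the determinant (which is antisymmetric and vanishes on tuples with repeated entries). -/

import Mathlib

/-- The modified Bessel function of the first kind `I_j(x)`, `j ∈ ℤ`,
defined by its power series (extended to negative indices by `I_{-j} = I_j`). -/
noncomputable def besselI (j : ℤ) (x : ℝ) : ℝ :=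
  ∑' s : ℕ, (x / 2) ^ (j.natAbs + 2 * s) /
    ((Nat.factorial s : ℝ) * (Nat.factorial (j.natAbs + s) : ℝ))

/-- The determinant `f_{k,n}(x) = det (I_{k_j - n_i}(x))_{i,j}`. -/
noncomputable def fdet (l : ℕ) (k n : Fin l → ℤ) (x : ℝ) : ℝ :=
  Matrix.det (fun i j : Fin l => besselI (k j - n i) x)

/- ### Auxiliary material -/

/-- The `s`-th term of the Bessel power series with nonnegative index `m`. -/
noncomputable def bterm (m : ℕ) (y : ℝ) (s : ℕ) : ℝ :=
  (y / 2) ^ (m + 2 * s) / ((Nat.factorial s : ℝ) * (Nat.factorial (m + s) : ℝ))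

/-- The `s`-th term of the termwise derivative of the Bessel power series. -/
noncomputable def dterm (m : ℕ) (y : ℝ) (s : ℕ) : ℝ :=
  ((m : ℝ) + 2 * s) * (y / 2) ^ (m + 2 * s - 1) /
    (2 * ((Nat.factorial s : ℝ) * (Nat.factorial (m + s) : ℝ)))

lemma besselI_natCast (m : ℕ) (y : ℝ) : besselI (m : ℤ) y = ∑' s : ℕ, bterm m y s := rfl

lemma besselI_congr {a b : ℤ} (h : a.natAbs = b.natAbs) : besselI a = besselI b := by
  unfold besselI; rw [h]

lemma summable_of_bound (f : ℕ → ℝ) (A q : ℝ)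
    (h : ∀ s, ‖f s‖ ≤ A * (q ^ s / (Nat.factorial s : ℝ))) : Summable f :=
  Summable.of_norm (Summable.of_nonneg_of_le (fun s => norm_nonneg _) h
    ((Real.summable_pow_div_factorial q).mul_left A))

lemma summable_bterm (m : ℕ) (y : ℝ) : Summable (bterm m y) := by
  apply summable_of_bound _ ((|y| / 2) ^ m) ((|y| / 2) ^ 2)
  intro s
  have hs : (0 : ℝ) < (Nat.factorial s : ℝ) := by exact_mod_cast Nat.factorial_pos s
  have hms : (1 : ℝ) ≤ (Nat.factorial (m + s) : ℝ) := by
    exact_mod_cast Nat.one_le_iff_ne_zero.mpr (Nat.factorial_pos (m + s)).ne'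
  have h1 : ‖bterm m y s‖ =
      (|y| / 2) ^ (m + 2 * s) / ((Nat.factorial s : ℝ) * (Nat.factorial (m + s) : ℝ)) := by
    rw [bterm, Real.norm_eq_abs, abs_div, abs_pow, abs_div]
    congr 1
    · norm_num
    · rw [abs_mul, abs_of_pos hs, abs_of_pos (by linarith : (0:ℝ) < (Nat.factorial (m+s) : ℝ))]
  rw [h1]
  calc (|y| / 2) ^ (m + 2 * s) / ((Nat.factorial s : ℝ) * (Nat.factorial (m + s) : ℝ))
      ≤ (|y| / 2) ^ (m + 2 * s) / ((Nat.factorial s : ℝ) * 1) := by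
        gcongr <;> positivity
    _ = (|y| / 2) ^ m * ((|y| / 2) ^ 2) ^ s / (Nat.factorial s : ℝ) := by
        rw [mul_one, pow_add, pow_mul]
    _ = (|y| / 2) ^ m * (((|y| / 2) ^ 2) ^ s / (Nat.factorial s : ℝ)) := by ring

lemma bterm_hasDerivAt (m s : ℕ) (y : ℝ) :
    HasDerivAt (fun z => bterm m z s) (dterm m y s) y := by
  have h1 : HasDerivAt (fun z : ℝ => z / 2) (1 / 2) y := (hasDerivAt_id y).div_const 2
  have h2 := (h1.pow (m + 2 * s)).div_const
    ((Nat.factorial s : ℝ) * (Nat.factorial (m + s) : ℝ))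
  convert h2 using 1
  · rfl
  · rfl
  · rfl
  unfold dterm
  push_cast
  ring

lemma summable_dterm_bound (m : ℕ) (r : ℝ) (hr : 0 < r) :
    Summable (fun s => ((m : ℝ) + 2 * s) * r ^ (m + 2 * s - 1) /
      (2 * ((Nat.factorial s : ℝ) * (Nat.factorial (m + s) : ℝ)))) := by
  apply summable_of_bound _ ((2 * r) ^ m / (2 * r)) ((2 * r) ^ 2)
  intro s
  have hs : (0 : ℝ) < (Nat.factorial s : ℝ) := by exact_mod_cast Nat.factorial_pos s
  have hms : (1 : ℝ) ≤ (Nat.factorial (m + s) : ℝ) := by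
    exact_mod_cast Nat.one_le_iff_ne_zero.mpr (Nat.factorial_pos (m + s)).ne'
  have hnorm : ‖((m : ℝ) + 2 * s) * r ^ (m + 2 * s - 1) /
      (2 * ((Nat.factorial s : ℝ) * (Nat.factorial (m + s) : ℝ)))‖ =
      ((m : ℝ) + 2 * s) * r ^ (m + 2 * s - 1) /
      (2 * ((Nat.factorial s : ℝ) * (Nat.factorial (m + s) : ℝ))) := by
    rw [Real.norm_eq_abs, abs_of_nonneg (by positivity)]
  rw [hnorm]
  rcases Nat.eq_zero_or_pos (m + 2 * s) with hE | hE
  · rw [show ((m : ℝ) + 2 * s) = ((m + 2 * s : ℕ) : ℝ) by push_cast; ring, hE]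
    simp only [Nat.cast_zero, zero_mul, zero_div]
    positivity
  · have hE2 : ((m : ℝ) + 2 * s) ≤ 2 ^ (m + 2 * s) := by
      calc ((m : ℝ) + 2 * s) = ((m + 2 * s : ℕ) : ℝ) := by push_cast; ring
        _ ≤ ((2 ^ (m + 2 * s) : ℕ) : ℝ) := by exact_mod_cast (Nat.lt_two_pow_self).le
        _ = 2 ^ (m + 2 * s) := by push_cast; ring
    have hkey : r ^ (m + 2 * s - 1) * r = r ^ (m + 2 * s) := by
      rw [← pow_succ]; congr 1; omega
    calc ((m : ℝ) + 2 * s) * r ^ (m + 2 * s - 1) /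
        (2 * ((Nat.factorial s : ℝ) * (Nat.factorial (m + s) : ℝ)))
        ≤ (2 : ℝ) ^ (m + 2 * s) * r ^ (m + 2 * s - 1) /
          (2 * ((Nat.factorial s : ℝ) * 1)) := by
          gcongr <;> first | positivity | exact hE2
      _ = (2 * r) ^ m / (2 * r) * ((2 * r) ^ 2) ^ s / (Nat.factorial s : ℝ) := by
          rw [mul_one, ← pow_mul, div_mul_eq_mul_div, div_div, ← pow_add, mul_pow, ← hkey]
          field_simp
      _ = (2 * r) ^ m / (2 * r) * (((2 * r) ^ 2) ^ s / (Nat.factorial s : ℝ)) := by ring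

lemma hasDerivAt_tsum_bterm (m : ℕ) (x : ℝ) :
    HasDerivAt (fun y => ∑' s : ℕ, bterm m y s) (∑' s : ℕ, dterm m x s) x := by
  set R : ℝ := |x| + 1 with hR
  have hr : (0 : ℝ) < R / 2 := by positivity
  have hx0 : x ∈ Set.Ioo (-R) R := by
    constructor
    · have := neg_abs_le x; simp only [hR]; linarith
    · have := le_abs_self x; simp only [hR]; linarith
  exact hasDerivAt_tsum_of_isPreconnected (summable_dterm_bound m (R / 2) hr)
    isOpen_Ioo ((convex_Ioo (-R) R).isPreconnected)
    (fun s y _ => bterm_hasDerivAt m s y)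
    (fun s y hy => by
      have hy' : |y| < R := abs_lt.mpr ⟨hy.1, hy.2⟩
      have h1 : ‖dterm m y s‖ = ((m : ℝ) + 2 * s) * |y / 2| ^ (m + 2 * s - 1) /
          (2 * ((Nat.factorial s : ℝ) * (Nat.factorial (m + s) : ℝ))) := by
        rw [dterm, Real.norm_eq_abs, abs_div, abs_mul, abs_pow,
          abs_of_nonneg (by positivity : (0:ℝ) ≤ (m : ℝ) + 2 * s),
          abs_of_nonneg (by positivity : (0:ℝ) ≤ 2 * ((Nat.factorial s : ℝ) * (Nat.factorial (m + s) : ℝ)))]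
      rw [h1]
      have h2 : |y / 2| ≤ R / 2 := by rw [abs_div, abs_of_pos (by norm_num : (0:ℝ) < 2)]; linarith
      gcongr <;> positivity)
    hx0 (summable_bterm m x) hx0

lemma summable_dterm (m : ℕ) (x : ℝ) : Summable (dterm m x) := by
  set R : ℝ := |x| + 1 with hR
  have hr : (0 : ℝ) < R / 2 := by positivity
  apply Summable.of_norm
  apply Summable.of_nonneg_of_le (fun s => norm_nonneg _) _ 
    ((summable_dterm_bound m (R / 2) hr).abs)
  intro s
  have h1 : ‖dterm m x s‖ = ((m : ℝ) + 2 * s) * |x / 2| ^ (m + 2 * s - 1) /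
      (2 * ((Nat.factorial s : ℝ) * (Nat.factorial (m + s) : ℝ))) := by
    rw [dterm, Real.norm_eq_abs, abs_div, abs_mul, abs_pow,
      abs_of_nonneg (by positivity : (0:ℝ) ≤ (m : ℝ) + 2 * s),
      abs_of_nonneg (by positivity : (0:ℝ) ≤ 2 * ((Nat.factorial s : ℝ) * (Nat.factorial (m + s) : ℝ)))]
  rw [h1]
  have h2 : |x / 2| ≤ R / 2 := by
    rw [abs_div, abs_of_pos (by norm_num : (0:ℝ) < 2)]
    have := le_abs_self x
    simp only [hR]; linarith [abs_nonneg x]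
  calc ((m : ℝ) + 2 * s) * |x / 2| ^ (m + 2 * s - 1) /
      (2 * ((Nat.factorial s : ℝ) * (Nat.factorial (m + s) : ℝ)))
      ≤ ((m : ℝ) + 2 * s) * (R / 2) ^ (m + 2 * s - 1) /
        (2 * ((Nat.factorial s : ℝ) * (Nat.factorial (m + s) : ℝ))) := by
        gcongr <;> positivity
    _ ≤ |((m : ℝ) + 2 * s) * (R / 2) ^ (m + 2 * s - 1) /
        (2 * ((Nat.factorial s : ℝ) * (Nat.factorial (m + s) : ℝ)))| := le_abs_self _

lemma tsum_dterm_zero (x : ℝ) : ∑' s : ℕ, dterm 0 x s = ∑' s : ℕ, bterm 1 x s := by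
  rw [Summable.tsum_eq_zero_add (summable_dterm 0 x)]
  have h0 : dterm 0 x 0 = 0 := by simp [dterm]
  rw [h0, zero_add]
  apply tsum_congr
  intro s
  have hs : (0 : ℝ) < (Nat.factorial s : ℝ) := by exact_mod_cast Nat.factorial_pos s
  have hs1 : (0 : ℝ) < (Nat.factorial (s + 1) : ℝ) := by exact_mod_cast Nat.factorial_pos (s + 1)
  unfold dterm bterm
  rw [show 0 + 2 * (s + 1) - 1 = 1 + 2 * s by omega,
    show 0 + (s + 1) = s + 1 by omega, show 1 + s = s + 1 by omega,
    Nat.factorial_succ]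
  push_cast
  field_simp
  ring

lemma tsum_dterm_succ (m : ℕ) (x : ℝ) :
    ∑' s : ℕ, dterm (m + 1) x s =
      (∑' s : ℕ, bterm m x s + ∑' s : ℕ, bterm (m + 2) x s) / 2 := by
  set C : ℕ → ℝ := fun s => (s : ℝ) * (x / 2) ^ (m + 2 * s) /
    (2 * ((Nat.factorial s : ℝ) * (Nat.factorial (m + 1 + s) : ℝ))) with hC
  have key : ∀ s, dterm (m + 1) x s = bterm m x s / 2 + C s := by
    intro s
    have hs : (0 : ℝ) < (Nat.factorial s : ℝ) := by exact_mod_cast Nat.factorial_pos s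
    have hms : (0 : ℝ) < (Nat.factorial (m + s) : ℝ) := by exact_mod_cast Nat.factorial_pos (m + s)
    unfold dterm bterm
    simp only [hC]
    rw [show m + 1 + 2 * s - 1 = m + 2 * s by omega,
      show m + 1 + s = (m + s) + 1 by omega, Nat.factorial_succ]
    push_cast
    field_simp
    ring
  have hshift : ∀ s, C (s + 1) = bterm (m + 2) x s / 2 := by
    intro s
    have hs : (0 : ℝ) < (Nat.factorial s : ℝ) := by exact_mod_cast Nat.factorial_pos s
    have hms : (0 : ℝ) < (Nat.factorial (m + 2 + s) : ℝ) := by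
      exact_mod_cast Nat.factorial_pos (m + 2 + s)
    simp only [hC]
    unfold bterm
    rw [show m + 2 * (s + 1) = m + 2 + 2 * s by omega,
      show m + 1 + (s + 1) = m + 2 + s by omega, Nat.factorial_succ]
    push_cast
    field_simp
  have hA : Summable (fun s => bterm m x s / 2) := (summable_bterm m x).div_const 2
  have hCsum : Summable C := by
    have : Summable (fun s => dterm (m + 1) x s - bterm m x s / 2) :=
      (summable_dterm (m + 1) x).sub hA
    exact this.congr (fun s => by rw [key s]; ring)
  calc ∑' s : ℕ, dterm (m + 1) x s = ∑' s : ℕ, (bterm m x s / 2 + C s) := tsum_congr key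
    _ = (∑' s : ℕ, bterm m x s / 2) + ∑' s : ℕ, C s := Summable.tsum_add hA hCsum
    _ = (∑' s : ℕ, bterm m x s) / 2 + (C 0 + ∑' s : ℕ, C (s + 1)) := by
        rw [tsum_div_const, Summable.tsum_eq_zero_add hCsum]
    _ = (∑' s : ℕ, bterm m x s) / 2 + ∑' s : ℕ, bterm (m + 2) x s / 2 := by
        have : C 0 = 0 := by simp [hC]
        rw [this, zero_add]
        exact congrArg _ (tsum_congr hshift)
    _ = (∑' s : ℕ, bterm m x s + ∑' s : ℕ, bterm (m + 2) x s) / 2 := by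
        rw [tsum_div_const]; ring

lemma besselI_hasDerivAt (j : ℤ) (x : ℝ) :
    HasDerivAt (besselI j) ((besselI (j - 1) x + besselI (j + 1) x) / 2) x := by
  have hfun : besselI j = fun y => ∑' s : ℕ, bterm j.natAbs y s := rfl
  rw [hfun]
  rcases hn : j.natAbs with _ | m
  · have hj : j = 0 := Int.natAbs_eq_zero.mp hn
    subst hj
    have h := hasDerivAt_tsum_bterm 0 x
    rw [tsum_dterm_zero] at h
    convert h using 1
    rw [besselI_congr (show ((0:ℤ) - 1).natAbs = ((0:ℤ) + 1).natAbs by decide)]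
    rw [show ((0:ℤ) + 1) = ((1:ℕ) : ℤ) by norm_num, besselI_natCast]
    ring
  · have h := hasDerivAt_tsum_bterm (m + 1) x
    rw [tsum_dterm_succ] at h
    convert h using 2
    rcases le_or_gt 0 j with hj | hj
    · rw [besselI_congr (show (j - 1).natAbs = ((m : ℤ)).natAbs by omega),
        besselI_congr (show (j + 1).natAbs = ((m + 2 : ℕ) : ℤ).natAbs by push_cast; omega)]
      rw [besselI_natCast, besselI_natCast]
    · rw [besselI_congr (show (j - 1).natAbs = ((m + 2 : ℕ) : ℤ).natAbs by push_cast; omega),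
        besselI_congr (show (j + 1).natAbs = ((m : ℤ)).natAbs by omega)]
      rw [besselI_natCast, besselI_natCast]
      ring

lemma hasDerivAt_det (l : ℕ) (x : ℝ) (M : ℝ → Matrix (Fin l) (Fin l) ℝ)
    (M' : Matrix (Fin l) (Fin l) ℝ) (h : ∀ i j, HasDerivAt (fun y => M y i j) (M' i j) x) :
    HasDerivAt (fun y => (M y).det)
      (∑ j : Fin l, ((M x).updateCol j (fun i => M' i j)).det) x := by
  have hprod : ∀ σ : Equiv.Perm (Fin l), HasDerivAt (fun y => ∏ i, M y (σ i) i)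
      (∑ j : Fin l, (∏ i ∈ Finset.univ.erase j, M x (σ i) i) • M' (σ j) j) x :=
    fun σ => HasDerivAt.fun_finsetProd (fun j _ => h (σ j) j)
  have H : HasDerivAt
      (fun y => ∑ σ : Equiv.Perm (Fin l),
        ((Equiv.Perm.sign σ : ℤ) : ℝ) * ∏ i, M y (σ i) i)
      (∑ σ : Equiv.Perm (Fin l), ((Equiv.Perm.sign σ : ℤ) : ℝ) *
        ∑ j : Fin l, (∏ i ∈ Finset.univ.erase j, M x (σ i) i) • M' (σ j) j)
      x := HasDerivAt.fun_sum fun σ _ => (hprod σ).const_mul _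
  have e1 : (fun y => (M y).det) = fun y => ∑ σ : Equiv.Perm (Fin l),
      ((Equiv.Perm.sign σ : ℤ) : ℝ) * ∏ i, M y (σ i) i :=
    funext fun y => Matrix.det_apply' (M y)
  rw [e1]
  convert H using 1
  calc ∑ j : Fin l, ((M x).updateCol j (fun i => M' i j)).det
      = ∑ j : Fin l, ∑ σ : Equiv.Perm (Fin l), ((Equiv.Perm.sign σ : ℤ) : ℝ) *
          ((∏ i ∈ Finset.univ.erase j, M x (σ i) i) * M' (σ j) j) := by
        refine Finset.sum_congr rfl fun j _ => ?_
        rw [Matrix.det_apply']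
        refine Finset.sum_congr rfl fun σ _ => ?_
        congr 1
        rw [← Finset.mul_prod_erase Finset.univ _ (Finset.mem_univ j),
          Matrix.updateCol_self, mul_comm]
        congr 1
        exact Finset.prod_congr rfl fun i hi =>
          Matrix.updateCol_ne (Finset.ne_of_mem_erase hi)
    _ = ∑ σ : Equiv.Perm (Fin l), ∑ j : Fin l, ((Equiv.Perm.sign σ : ℤ) : ℝ) *
          ((∏ i ∈ Finset.univ.erase j, M x (σ i) i) * M' (σ j) j) := Finset.sum_comm
    _ = ∑ σ : Equiv.Perm (Fin l), ((Equiv.Perm.sign σ : ℤ) : ℝ) *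
          ∑ j : Fin l, (∏ i ∈ Finset.univ.erase j, M x (σ i) i) • M' (σ j) j := by
        refine Finset.sum_congr rfl fun σ _ => ?_
        rw [Finset.mul_sum]
        refine Finset.sum_congr rfl fun j _ => ?_
        rw [smul_eq_mul]

/-- The family `f(x,k) = f_{k,n}(x)` satisfies
`∂f/∂x (x,k) = (1/2) ∑_{s} [f(x, k - e_s) + f(x, k + e_s)]`. -/
theorem fdet_ode (l : ℕ) (hl : 1 ≤ l) (n : Fin l → ℤ) (hn : StrictAnti n)
    (k : Fin l → ℤ) (hk : StrictAnti k) (x : ℝ) :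
    HasDerivAt (fun y => fdet l k n y)
      ((∑ s : Fin l, (fdet l (Function.update k s (k s - 1)) n x +
        fdet l (Function.update k s (k s + 1)) n x)) / 2) x := by
  have h := hasDerivAt_det l x (fun y => Matrix.of fun i j => besselI (k j - n i) y)
    (Matrix.of fun i j => (besselI (k j - n i - 1) x + besselI (k j - n i + 1) x) / 2)
    (fun i j => besselI_hasDerivAt (k j - n i) x)
  have hfun : (fun y => fdet l k n y) =
      fun y => (Matrix.of fun i j : Fin l => besselI (k j - n i) y).det := rfl
  rw [hfun]
  convert h using 1
  rw [Finset.sum_div]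
  refine Finset.sum_congr rfl fun j _ => ?_
  set A : Matrix (Fin l) (Fin l) ℝ := Matrix.of fun i j : Fin l => besselI (k j - n i) x with hA
  set u : Fin l → ℝ := fun i => besselI (Function.update k j (k j - 1) j - n i) x
  have hcol : (fun i => (Matrix.of fun i j' : Fin l =>
      (besselI (k j' - n i - 1) x + besselI (k j' - n i + 1) x) / 2) i j) =
      (2⁻¹ : ℝ) • ((fun i => besselI (k j - n i - 1) x) + fun i => besselI (k j - n i + 1) x) := by
    funext i
    simp only [Matrix.of_apply, Pi.smul_apply, Pi.add_apply, smul_eq_mul]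
    ring
  rw [hcol, Matrix.det_updateCol_smul, Matrix.det_updateCol_add]
  have h1 : A.updateCol j (fun i => besselI (k j - n i - 1) x) =
      Matrix.of fun i j' : Fin l => besselI (Function.update k j (k j - 1) j' - n i) x := by
    ext i j'
    rcases eq_or_ne j' j with rfl | hne
    · simp only [Matrix.updateCol_self, Matrix.of_apply, Function.update_self]
      congr 1; ring
    · simp only [Matrix.updateCol_ne hne, Matrix.of_apply, Function.update_of_ne hne]; rfl
  have h2 : A.updateCol j (fun i => besselI (k j - n i + 1) x) =
      Matrix.of fun i j' : Fin l => besselI (Function.update k j (k j + 1) j' - n i) x := by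
    ext i j'
    rcases eq_or_ne j' j with rfl | hne
    · simp only [Matrix.updateCol_self, Matrix.of_apply, Function.update_self]
      congr 1; ring
    · simp only [Matrix.updateCol_ne hne, Matrix.of_apply, Function.update_of_ne hne]; rfl
  rw [h1, h2]
  have e1 : fdet l (Function.update k j (k j - 1)) n x =
      (Matrix.of fun i j' : Fin l => besselI (Function.update k j (k j - 1) j' - n i) x).det := rfl
  have e2 : fdet l (Function.update k j (k j + 1)) n x =
      (Matrix.of fun i j' : Fin l => besselI (Function.update k j (k j + 1) j' - n i) x).det := rfl
  rw [← e1, ← e2]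
  ring
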